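/- Let P be the path v_1 v_2 v_3 v_4 v_5 on 5 vertices, let k ≥ 1 and c ∈ [k], and let x̄ ∈ ℝ^{5k} be the vector with x̄_{v_1,c} = x̄_{v_3,c} = x̄_{v_5,c} = 1/2 and all other entries 0. Then x̄ satisfies all cover inequalities Σ_c x_{v,c} ≤ 1, all nonnegativity constraints, and all connectivity inequalities x_{u,c} + x_{w,c} − Σ_{z∈Z} x_{z,c} ≤ 1 for minimal separators Z of non-adjacent pairs {u,w}; but x̄ violates the inequality x_{v_1,c} + x_{v_3,c} + x_{v_5,c} − x_{v_2,c} − x_{v_4,c} ≤ 1, which is valid for all incidence vectors of connected k-subpartitions of P. -/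

import Mathlib

open scoped Classical

/-- `Z` is a `u,v`-separator in `G`. -/
def IsSep {V : Type*} (G : SimpleGraph V) (u v : V) (Z : Set V) : Prop :=
  Z ⊆ ({u, v} : Set V)ᶜ ∧
    ∀ (hu : u ∈ Zᶜ) (hv : v ∈ Zᶜ),
      ¬ (G.induce Zᶜ).Reachable ⟨u, hu⟩ ⟨v, hv⟩

/-- A connected `k`-subpartition of `G`. -/
def ConnKSub {V : Type*} (G : SimpleGraph V) (k : ℕ) (P : Fin k → Set V) : Prop :=
  (∀ i j, i ≠ j → Disjoint (P i) (P j)) ∧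
    ∀ i, P i = ∅ ∨ (G.induce (P i)).Connected

/-- The path `v₁v₂v₃v₄v₅` on five vertices `0,…,4`. -/
def Path5 : SimpleGraph (Fin 5) :=
  SimpleGraph.fromEdgeSet {s(0, 1), s(1, 2), s(2, 3), s(3, 4)}

lemma path5_adj {u v : Fin 5} (h : Path5.Adj u v) :
    u.val + 1 = v.val ∨ v.val + 1 = u.val := by
  simp only [Path5, SimpleGraph.fromEdgeSet_adj, Set.mem_insert_iff,
    Set.mem_singleton_iff, Sym2.eq, Sym2.rel_iff', Prod.mk.injEq, Prod.swap_prod_mk] at h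
  rcases h with ⟨h, -⟩
  rcases h with (⟨h1,h2⟩|⟨h1,h2⟩)|(⟨h1,h2⟩|⟨h1,h2⟩)|(⟨h1,h2⟩|⟨h1,h2⟩)|(⟨h1,h2⟩|⟨h1,h2⟩) <;>
    subst h1 <;> subst h2 <;> decide

lemma cross {S : Set (Fin 5)} (m : Fin 5) (hm : m ∉ S) :
    ∀ {a b : S} (_ : (Path5.induce S).Walk a b), (a : Fin 5) < m → (b : Fin 5) < m := by
  intro a b p
  induction p with
  | nil => exact id
  | @cons u x w hadj p ih =>
    intro hu
    apply ih
    have hadj' : Path5.Adj (u : Fin 5) (x : Fin 5) := hadj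
    have hx : (x : Fin 5) ≠ m := fun h => hm (h ▸ x.2)
    have := path5_adj hadj'
    have h1 : (u : Fin 5).val < m.val := hu
    have h2 : (x : Fin 5).val ≠ m.val := fun h => hx (Fin.ext h)
    exact Fin.lt_def.mpr (by omega)

lemma mid_mem {S : Set (Fin 5)} (hc : (Path5.induce S).Connected)
    {a b m : Fin 5} (ha : a ∈ S) (hb : b ∈ S) (hab1 : a < m) (hab2 : m < b) : m ∈ S := by
  by_contra hm
  obtain ⟨p⟩ := hc.preconnected ⟨a, ha⟩ ⟨b, hb⟩
  exact absurd (cross m hm p hab1) (not_lt.mpr hab2.le)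

theorem stmt11 (k : ℕ) (hk : 1 ≤ k) (c : Fin k) (xb : Fin 5 → Fin k → ℝ)
    (hxb : ∀ v c', xb v c' =
      if c' = c ∧ (v = 0 ∨ v = 2 ∨ v = 4) then 1 / 2 else 0) :
    (∀ v : Fin 5, ∑ c' : Fin k, xb v c' ≤ 1) ∧
      (∀ (v : Fin 5) (c' : Fin k), 0 ≤ xb v c') ∧
      (∀ u w : Fin 5, u ≠ w → ¬ Path5.Adj u w →
        ∀ Z : Finset (Fin 5),
          (IsSep Path5 u w (↑Z : Set (Fin 5)) ∧
            ∀ Z' ⊆ Z, Z' ≠ Z → ¬ IsSep Path5 u w (↑Z' : Set (Fin 5))) →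
          ∀ c' : Fin k, xb u c' + xb w c' - ∑ z ∈ Z, xb z c' ≤ 1) ∧
      (1 < xb 0 c + xb 2 c + xb 4 c - xb 1 c - xb 3 c) ∧
      (∀ P : Fin k → Set (Fin 5), ConnKSub Path5 k P →
        ((if (0 : Fin 5) ∈ P c then (1 : ℝ) else 0) +
            (if (2 : Fin 5) ∈ P c then 1 else 0) +
            (if (4 : Fin 5) ∈ P c then 1 else 0) -
            (if (1 : Fin 5) ∈ P c then 1 else 0) -
            (if (3 : Fin 5) ∈ P c then 1 else 0)) ≤ 1) := by
  have hnn : ∀ v c', 0 ≤ xb v c' := by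
    intro v c'; rw [hxb]; split <;> norm_num
  have hle : ∀ v c', xb v c' ≤ 1 / 2 := by
    intro v c'; rw [hxb]; split <;> norm_num
  refine ⟨?_, hnn, ?_, ?_, ?_⟩
  · intro v
    have : ∑ c' : Fin k, xb v c' =
        ∑ c' : Fin k, if c' = c then xb v c' else 0 := by
      apply Finset.sum_congr rfl
      intro c' _
      by_cases h : c' = c
      · simp [h]
      · rw [hxb]; simp [h]
    rw [this, Finset.sum_ite_eq' Finset.univ c (xb v)]
    simp only [Finset.mem_univ, if_true]
    linarith [hle v c]
  · intro u w _ _ Z _ c'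
    have : 0 ≤ ∑ z ∈ Z, xb z c' := Finset.sum_nonneg fun z _ => hnn z c'
    linarith [hle u c', hle w c']
  · have e0 : xb 0 c = 1 / 2 := by rw [hxb, if_pos ⟨rfl, Or.inl rfl⟩]
    have e2 : xb 2 c = 1 / 2 := by rw [hxb, if_pos ⟨rfl, Or.inr (Or.inl rfl)⟩]
    have e4 : xb 4 c = 1 / 2 := by rw [hxb, if_pos ⟨rfl, Or.inr (Or.inr rfl)⟩]
    have e1 : xb 1 c = 0 := by
      rw [hxb, if_neg]; rintro ⟨-, h⟩; revert h; decide
    have e3 : xb 3 c = 0 := by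
      rw [hxb, if_neg]; rintro ⟨-, h⟩; revert h; decide
    rw [e0, e2, e4, e1, e3]; norm_num
  · intro P hP
    by_cases hS : P c = ∅
    · simp [hS]
    have hconn : (Path5.induce (P c)).Connected := (hP.2 c).resolve_left hS
    have h01 : (0 : Fin 5) ∈ P c → (2 : Fin 5) ∈ P c → (1 : Fin 5) ∈ P c :=
      fun h0 h2 => mid_mem hconn h0 h2 (by decide) (by decide)
    have h23 : (2 : Fin 5) ∈ P c → (4 : Fin 5) ∈ P c → (3 : Fin 5) ∈ P c :=
      fun h2 h4 => mid_mem hconn h2 h4 (by decide) (by decide)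
    have h04a : (0 : Fin 5) ∈ P c → (4 : Fin 5) ∈ P c → (1 : Fin 5) ∈ P c :=
      fun h0 h4 => mid_mem hconn h0 h4 (by decide) (by decide)
    have h04b : (0 : Fin 5) ∈ P c → (4 : Fin 5) ∈ P c → (3 : Fin 5) ∈ P c :=
      fun h0 h4 => mid_mem hconn h0 h4 (by decide) (by decide)
    split_ifs <;> norm_num <;> tauto
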